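/- For every integer n ≥ 0, one has the matrix factorization M_n = L_n · U_n over ℚ, where M_n, L_n, U_n are the (n+1)×(n+1) matrices with entries (for 0 ≤ i,j ≤ n): m_{i,j} = C(2j+1, i) − δ_{2j+1,i}; l_{i,j} = C(j, i−j); and u_{i,j} = 1 if i = 0, u_{i,j} = C(2j−i, i−1)·(2j+1)/i if 0 < i < 2j+1, and u_{i,j} = 0 if i ≥ 2j+1. -/

import Mathlib

open Polynomial Finset

/-- `Yp = X(1+X)`. -/
noncomputable def Yp : ℚ[X] := X * (1 + X)

/-- Fibonacci-like polynomial sequence in `Yp`. -/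
noncomputable def Fp : ℕ → ℚ[X]
  | 0 => 1
  | 1 => 1
  | (m+2) => Fp (m+1) + Yp * Fp m

lemma Fp_add_two (m : ℕ) : Fp (m+2) = Fp (m+1) + Yp * Fp m := rfl

lemma Fp_closed (m : ℕ) :
    (1 + 2*X) * Fp m = (1+X)^(m+1) + (-1)^m * X^(m+1) := by
  induction m using Nat.twoStepInduction with
  | zero => simp only [Fp]; ring
  | one => simp only [Fp]; ring
  | more m ih1 ih2 =>
    have h : (1 + 2*X) * Fp (m+2) = ((1 + 2*X) * Fp (m+1)) + Yp * ((1 + 2*X) * Fp m) := by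
      rw [Fp_add_two]; ring
    rw [h, ih1, ih2, Yp]
    ring

lemma one_add_two_X_ne_zero : (1 + 2*X : ℚ[X]) ≠ 0 := by
  intro h
  have := congrArg (fun p => Polynomial.coeff p 0) h
  simp at this

lemma Fp_key (m : ℕ) :
    Fp (m+2) + Yp * Fp m = (1+X)^(m+2) + (-1)^m * X^(m+2) := by
  apply mul_left_cancel₀ one_add_two_X_ne_zero
  rw [mul_add, mul_comm Yp, ← mul_assoc, Fp_closed, Fp_closed, Yp]
  ring

lemma Fp_sum (m : ℕ) :
    Fp m = ∑ k ∈ range (m+1), Polynomial.C (((m-k).choose k : ℕ) : ℚ) * Yp^k := by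
  induction m using Nat.twoStepInduction with
  | zero => simp [Fp]
  | one =>
    rw [Finset.sum_range_succ, Finset.sum_range_one]
    norm_num [Fp]
  | more m ih1 ih2 =>
    rw [Fp_add_two, ih1, ih2]
    rw [Finset.sum_range_succ (n := m+2)]
    have htop : ((m + 2 - (m+2)).choose (m+2) : ℕ) = 0 :=
      Nat.choose_eq_zero_of_lt (by omega)
    rw [htop]
    rw [Finset.sum_range_succ' (fun k => Polynomial.C (((m+2-k).choose k : ℕ) : ℚ) * Yp^k) (m+1)]
    rw [Finset.sum_range_succ' (fun k => Polynomial.C (((m+1-k).choose k : ℕ) : ℚ) * Yp^k) (m+1)]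
    rw [Finset.mul_sum]
    simp only [Nat.cast_zero, Polynomial.C_0, zero_mul, add_zero, Nat.sub_zero, pow_zero,
      mul_one]
    rw [add_right_comm, ← Finset.sum_add_distrib]
    congr 1
    apply Finset.sum_congr rfl
    intro t ht
    simp only [Finset.mem_range] at ht
    have h1 : m + 2 - (t+1) = (m - t) + 1 := by omega
    have h2 : m + 1 - (t+1) = m - t := by omega
    rw [h1, h2, Nat.choose_succ_succ]
    push_cast
    rw [Polynomial.C_add]
    ring

lemma choose_zero_of (m k : ℕ) (h : m < 2*k) : ((m-k).choose k : ℕ) = 0 :=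
  Nat.choose_eq_zero_of_lt (by omega)

lemma sum_ext (m N : ℕ) (h : m ≤ 2*N+1) :
    ∑ k ∈ range (N+1), Polynomial.C (((m-k).choose k : ℕ) : ℚ) * Yp^k = Fp m := by
  rw [Fp_sum]
  have hzero : ∀ x ∈ range (m+N+2), x ∉ range (N+1) →
      Polynomial.C (((m-x).choose x : ℕ) : ℚ) * Yp^x = 0 := by
    intro x hx hnx
    simp only [Finset.mem_range, not_lt] at hx hnx
    rw [choose_zero_of m x (by omega)]
    simp
  have hzero2 : ∀ x ∈ range (m+N+2), x ∉ range (m+1) →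
      Polynomial.C (((m-x).choose x : ℕ) : ℚ) * Yp^x = 0 := by
    intro x hx hnx
    simp only [Finset.mem_range, not_lt] at hx hnx
    rw [choose_zero_of m x (by omega)]
    simp
  rw [Finset.sum_subset (Finset.range_subset_range.mpr (by omega)) hzero,
    Finset.sum_subset (Finset.range_subset_range.mpr (by omega)) hzero2]

lemma absorb (m k : ℕ) (h1 : 0 < k) (h2 : k < m) :
    ((m-1-k).choose (k-1) : ℚ) * (m : ℚ) / (k : ℚ)
      = ((m-k).choose k : ℚ) + ((m-1-k).choose (k-1) : ℚ) := by
  have hnat : (m - k) * ((m-1-k).choose (k-1)) = (m-k).choose k * k := by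
    have h := Nat.add_one_mul_choose_eq (m-k-1) (k-1)
    have h3 : m - k - 1 + 1 = m - k := by omega
    have h4 : k - 1 + 1 = k := by omega
    have h5 : m - 1 - k = m - k - 1 := by omega
    rw [h3, h4] at h
    rw [h5]
    exact h
  have hk0 : (k : ℚ) ≠ 0 := Nat.cast_ne_zero.mpr h1.ne'
  rw [div_eq_iff hk0]
  have hq := congrArg (fun x : ℕ => (x : ℚ)) hnat
  push_cast [Nat.cast_sub h2.le] at hq
  nlinarith [hq]

/-- The matrix factorization `Mₙ = Lₙ · Uₙ` over `ℚ`, where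
`m_{i,j} = C(2j+1, i) - δ_{2j+1, i}`, `l_{i,j} = C(j, i-j)` (zero if `i < j`),
and `u_{i,j} = 1` if `i = 0`, `u_{i,j} = C(2j-i, i-1)·(2j+1)/i` if `0 < i < 2j+1`,
and `u_{i,j} = 0` if `i ≥ 2j+1`. -/
theorem binomial_LU_decomposition (n : ℕ)
    (M L U : Matrix (Fin (n + 1)) (Fin (n + 1)) ℚ)
    (hM : ∀ i j : Fin (n + 1),
      M i j = ((2 * (j : ℕ) + 1).choose (i : ℕ) : ℚ) -
        if 2 * (j : ℕ) + 1 = (i : ℕ) then 1 else 0)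
    (hL : ∀ i j : Fin (n + 1),
      L i j = if (i : ℕ) < (j : ℕ) then 0 else ((j : ℕ).choose ((i : ℕ) - (j : ℕ)) : ℚ))
    (hU : ∀ i j : Fin (n + 1),
      U i j = if (i : ℕ) = 0 then 1
        else if (i : ℕ) < 2 * (j : ℕ) + 1 then
          ((2 * (j : ℕ) - (i : ℕ)).choose ((i : ℕ) - 1) : ℚ) * (2 * (j : ℕ) + 1) / (i : ℕ)
        else 0) :
    M = L * U := by
  ext i j
  rw [Matrix.mul_apply, hM]
  by_cases hj0 : (j : ℕ) = 0
  · -- special case j = 0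
    rw [Finset.sum_eq_single (0 : Fin (n+1))]
    · rw [hL, hU]
      simp only [Fin.val_zero, hj0]
      norm_num
      rcases Nat.lt_or_ge (i : ℕ) 2 with h | h
      · interval_cases h' : (i : ℕ) <;> simp_all
      · rw [Nat.choose_eq_zero_of_lt (by omega), Nat.choose_eq_zero_of_lt (by omega)]
        have : ¬ (2 * (0:ℕ) + 1 = (i:ℕ)) := by omega
        simp_all
    · intro b _ hb
      rw [hU]
      have hb' : (b : ℕ) ≠ 0 := fun h => hb (Fin.ext h)
      rw [if_neg hb', if_neg (by omega), mul_zero]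
    · intro h; exact absurd (Finset.mem_univ _) h
  · -- main case j ≥ 1
    have hj1 : 1 ≤ (j : ℕ) := Nat.one_le_iff_ne_zero.mpr hj0
    have hjn : (j : ℕ) ≤ n := Nat.lt_succ_iff.mp j.isLt
    set m : ℕ := 2 * (j : ℕ) + 1 with hm
    -- rewrite each summand as a polynomial coefficient
    have hterm : ∀ k : Fin (n+1), L i k * U k j =
        (Polynomial.C (((m - (k:ℕ)).choose (k:ℕ) : ℕ) : ℚ) * Yp^(k:ℕ)
          + (if (k:ℕ) = 0 then 0 else
              Polynomial.C (((m - 1 - (k:ℕ)).choose ((k:ℕ)-1) : ℕ) : ℚ) * Yp^(k:ℕ))).coeff i := by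
      intro k
      have hY : (Yp^(k:ℕ)).coeff i
          = if (i : ℕ) < (k:ℕ) then 0 else (((k:ℕ).choose ((i:ℕ) - (k:ℕ)) : ℕ) : ℚ) := by
        have : Yp^(k:ℕ) = (1+X)^(k:ℕ) * X^(k:ℕ) := by rw [Yp, mul_pow, mul_comm]
        rw [this, Polynomial.coeff_mul_X_pow', Polynomial.coeff_one_add_X_pow]
        split_ifs with h1 h2 h2 <;> first | rfl | omega
      rw [Polynomial.coeff_add, Polynomial.coeff_C_mul]
      have hUval : U k j = (((m - (k:ℕ)).choose (k:ℕ) : ℕ) : ℚ)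
          + (if (k:ℕ) = 0 then 0 else (((m - 1 - (k:ℕ)).choose ((k:ℕ)-1) : ℕ) : ℚ)) := by
        rw [hU]
        rcases Nat.eq_zero_or_pos (k : ℕ) with hk0 | hk0
        · rw [if_pos hk0, if_pos hk0, hk0]
          simp [hm]
        · rw [if_neg hk0.ne', if_neg hk0.ne']
          by_cases hkm : (k : ℕ) < m
          · rw [if_pos (by rw [← hm]; exact hkm)]
            have h2j : 2 * (j:ℕ) - (k:ℕ) = m - 1 - (k:ℕ) := by omega
            rw [h2j]
            have := absorb m (k:ℕ) hk0 hkm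
            push_cast at this ⊢
            rw [← this]
            simp [hm]
          · rw [if_neg (by rw [← hm]; exact hkm)]
            have e1 : ((m - (k:ℕ)).choose (k:ℕ) : ℕ) = 0 :=
              Nat.choose_eq_zero_of_lt (by omega)
            have e2 : ((m - 1 - (k:ℕ)).choose ((k:ℕ)-1) : ℕ) =  0 :=
              Nat.choose_eq_zero_of_lt (by omega)
            rw [e1, e2]
            simp
      rw [hL, hUval, hY]
      rcases Nat.eq_zero_or_pos (k : ℕ) with hk0 | hk0
      · simp [hk0]
      · simp only [if_neg hk0.ne', Polynomial.coeff_C_mul, hY]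
        ring
    rw [Finset.sum_congr rfl (fun k _ => hterm k)]
    rw [Fin.sum_univ_eq_sum_range (fun k =>
        (Polynomial.C (((m - k).choose k : ℕ) : ℚ) * Yp^k
          + (if k = 0 then 0 else
              Polynomial.C (((m - 1 - k).choose (k-1) : ℕ) : ℚ) * Yp^k)).coeff i) (n+1)]
    rw [← Polynomial.finset_sum_coeff]
    have hsum : (∑ k ∈ range (n+1),
        (Polynomial.C (((m - k).choose k : ℕ) : ℚ) * Yp^k
          + (if k = 0 then 0 else
              Polynomial.C (((m - 1 - k).choose (k-1) : ℕ) : ℚ) * Yp^k)))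
        = (1+X)^m - X^m := by
      rw [Finset.sum_add_distrib]
      have hA : ∑ k ∈ range (n+1), Polynomial.C (((m - k).choose k : ℕ) : ℚ) * Yp^k = Fp m :=
        sum_ext m n (by omega)
      have hB : (∑ k ∈ range (n+1), (if k = 0 then 0 else
            Polynomial.C (((m - 1 - k).choose (k-1) : ℕ) : ℚ) * Yp^k))
          = Yp * Fp (m - 2) := by
        rw [Finset.sum_range_succ' (fun k => (if k = 0 then 0 else
            Polynomial.C (((m - 1 - k).choose (k-1) : ℕ) : ℚ) * Yp^k)) n]
        simp only [eq_self_iff_true, if_true, add_zero, Nat.succ_ne_zero, if_false,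
          Nat.add_sub_cancel]
        have hn1 : n = (n - 1) + 1 := by omega
        have hrw : ∀ t, m - 1 - (t + 1) = m - 2 - t := fun t => by omega
        calc ∑ t ∈ range n, Polynomial.C (((m - 1 - (t+1)).choose t : ℕ) : ℚ) * Yp^(t+1)
            = ∑ t ∈ range ((n-1)+1), Yp * (Polynomial.C (((m - 2 - t).choose t : ℕ) : ℚ) * Yp^t) := by
              rw [← hn1]
              exact Finset.sum_congr rfl (fun t _ => by rw [hrw t, pow_succ]; ring)
          _ = Yp * Fp (m - 2) := by
              rw [← Finset.mul_sum, sum_ext (m-2) (n-1) (by omega)]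
      rw [hA, hB]
      have hm2 : m - 2 + 2 = m := by omega
      have := Fp_key (m - 2)
      rw [hm2] at this
      rw [this]
      have hodd : Odd (m - 2) := ⟨(j:ℕ) - 1, by omega⟩
      rw [hodd.neg_one_pow]
      ring
    rw [hsum, Polynomial.coeff_sub, Polynomial.coeff_one_add_X_pow, Polynomial.coeff_X_pow]
    by_cases hmi : m = (i : ℕ)
    · rw [if_pos hmi, if_pos hmi.symm]
    · rw [if_neg hmi, if_neg (fun h => hmi h.symm)]
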